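/- Let F be a subset of the ball B_r(x) in ℝ^m and k ≥ 1. If F does not (rρ)-span any k-dimensional affine subspace, then F is contained in the (ρr)-neighborhood of some affine subspace of dimension at most k-1. -/

import Mathlib

open Metric Module Submodule Set

private lemma finrank_span_range_le' {E : Type*} [NormedAddCommGroup E]
    [NormedSpace ℝ E] {ι : Type*} [Fintype ι] (f : ι → E) :
    finrank ℝ (span ℝ (Set.range f)) ≤ Fintype.card ι := by
  classical
  exact (finrank_span_le_card _).trans
    (by convert Fintype.card_range_le f; rfl; rw [Set.toFinset_card])

private lemma snoc_image_eq {E : Type*} [NormedAddCommGroup E] {n : ℕ}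
    (p : Fin (n + 1) → E) (y : E) (t : ℕ) (ht : t ≤ n + 1) :
    ((fun l : Fin (n + 2) => (Fin.snoc p y : Fin (n + 2) → E) l
        - (Fin.snoc p y : Fin (n + 2) → E) 0) '' {l : Fin (n + 2) | (l : ℕ) < t})
      = (fun l : Fin (n + 1) => p l - p 0) '' {l : Fin (n + 1) | (l : ℕ) < t} := by
  have h0 : (Fin.snoc p y : Fin (n + 2) → E) 0 = p 0 := by
    have : (0 : Fin (n + 2)) = Fin.castSucc 0 := rfl
    rw [this, Fin.snoc_castSucc]
  ext v
  constructor
  · rintro ⟨l, hl, rfl⟩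
    have hl' : (l : ℕ) < n + 1 := lt_of_lt_of_le hl ht
    refine ⟨⟨l, hl'⟩, hl, ?_⟩
    have hsn : (Fin.snoc p y : Fin (n + 2) → E) l = p ⟨l, hl'⟩ := by
      simp only [Fin.snoc, hl', dif_pos, cast_eq]; rfl
    simp only [hsn, h0]
  · rintro ⟨l, hl, rfl⟩
    refine ⟨Fin.castSucc l, by simpa using hl, ?_⟩
    simp only [Fin.snoc_castSucc, h0]

private def GoodT (m : ℕ) (F : Set (EuclideanSpace ℝ (Fin m))) (c : ℝ) (j : ℕ) : Prop :=
  ∃ p : Fin (j + 1) → EuclideanSpace ℝ (Fin m),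
    (∀ i, p i ∈ F) ∧
    ∀ i : Fin (j + 1), 0 < (i : ℕ) →
      c ≤ infDist (p i)
        ((fun v => p 0 + v) ''
          (Submodule.span ℝ ((fun l : Fin (j + 1) => p l - p 0) ''
            {l : Fin (j + 1) | (l : ℕ) < (i : ℕ)}) : Set (EuclideanSpace ℝ (Fin m))))

private def GoalT (m k : ℕ) (F : Set (EuclideanSpace ℝ (Fin m))) (ρ r : ℝ) : Prop :=
  ∃ L : AffineSubspace ℝ (EuclideanSpace ℝ (Fin m)),
    (L : Set (EuclideanSpace ℝ (Fin m))).Nonempty ∧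
    finrank ℝ L.direction ≤ k - 1 ∧
    ∀ y ∈ F, infDist y (L : Set (EuclideanSpace ℝ (Fin m))) ≤ ρ * r

/-- If `F ⊆ B_r(x)` does not `(rρ)`-span any `k`-dimensional affine subspace
(i.e. contains no `(rρ)`-linearly independent `(k+1)`-tuple), then `F` is contained
in the `(ρr)`-neighborhood of some affine subspace of dimension at most `k-1`. -/
theorem stmt_2 {m : ℕ} (k : ℕ) (hk : 1 ≤ k)
    (x : EuclideanSpace ℝ (Fin m)) (r ρ : ℝ) (hr : 0 < r) (hρ : 0 < ρ)
    (F : Set (EuclideanSpace ℝ (Fin m))) (hF : F ⊆ ball x r)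
    (hspan : ¬ ∃ p : Fin (k + 1) → EuclideanSpace ℝ (Fin m),
      (∀ i, p i ∈ F) ∧
      ∀ i : Fin (k + 1), 0 < (i : ℕ) →
        r * ρ ≤ infDist (p i)
          ((fun v => p 0 + v) ''
            (Submodule.span ℝ ((fun j : Fin (k + 1) => p j - p 0) ''
              {j : Fin (k + 1) | (j : ℕ) < (i : ℕ)}) : Set (EuclideanSpace ℝ (Fin m))))) :
    ∃ L : AffineSubspace ℝ (EuclideanSpace ℝ (Fin m)),
      (L : Set (EuclideanSpace ℝ (Fin m))).Nonempty ∧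
      finrank ℝ L.direction ≤ k - 1 ∧
      ∀ y ∈ F, infDist y (L : Set (EuclideanSpace ℝ (Fin m))) ≤ ρ * r := by
  classical
  -- dispose of the empty case
  rcases F.eq_empty_or_nonempty with hFe | ⟨p0, hp0⟩
  · refine ⟨AffineSubspace.mk' x ⊥, ⟨x, AffineSubspace.self_mem_mk' x ⊥⟩, ?_, ?_⟩
    · rw [AffineSubspace.direction_mk']
      simp
    · intro y hy; rw [hFe] at hy; exact absurd hy (Set.notMem_empty y)
  -- the inductive step
  have step : ∀ j, j < k → GoodT m F (r * ρ) j →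
      GoalT m k F ρ r ∨ GoodT m F (r * ρ) (j + 1) := by
    rintro j hj ⟨p, hpF, hpd⟩
    set V : Submodule ℝ (EuclideanSpace ℝ (Fin m)) :=
      Submodule.span ℝ (Set.range (fun l : Fin (j + 1) => p l - p 0)) with hV
    have hrange : (fun l : Fin (j + 1) => p l - p 0) ''
        {l : Fin (j + 1) | (l : ℕ) < j + 1} = Set.range (fun l : Fin (j + 1) => p l - p 0) := by
      have h : {l : Fin (j + 1) | (l : ℕ) < j + 1} = Set.univ := by
        ext l; simp [l.is_lt, Fin.is_le]
      rw [h, Set.image_univ]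
    by_cases hclose : ∀ y ∈ F,
        infDist y ((fun v => p 0 + v) '' (V : Set (EuclideanSpace ℝ (Fin m)))) ≤ ρ * r
    · left
      refine ⟨AffineSubspace.mk' (p 0) V, ⟨p 0, AffineSubspace.self_mem_mk' _ _⟩, ?_, ?_⟩
      · rw [AffineSubspace.direction_mk']
        refine le_trans ?_ (Nat.le_sub_one_of_lt hj)
        have hins : Set.range (fun l : Fin (j + 1) => p l - p 0)
            = insert (0 : EuclideanSpace ℝ (Fin m))
              (Set.range (fun l : Fin j => p l.succ - p 0)) := by
          ext v
          constructor
          · rintro ⟨l, rfl⟩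
            rcases Fin.eq_zero_or_eq_succ l with rfl | ⟨l', rfl⟩
            · left; simp
            · right; exact ⟨l', rfl⟩
          · rintro (rfl | ⟨l', rfl⟩)
            · exact ⟨0, by simp⟩
            · exact ⟨l'.succ, rfl⟩
        rw [hV, hins, Submodule.span_insert_zero]
        simpa using finrank_span_range_le' (fun l : Fin j => p l.succ - p 0)
      · intro y hy
        have hle := hclose y hy
        have hset : ((AffineSubspace.mk' (p 0) V : AffineSubspace ℝ
              (EuclideanSpace ℝ (Fin m))) : Set (EuclideanSpace ℝ (Fin m)))
            = (fun v => p 0 + v) '' (V : Set (EuclideanSpace ℝ (Fin m))) := by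
          ext z
          simp only [SetLike.mem_coe, AffineSubspace.mem_mk', Set.mem_image]
          constructor
          · intro h; exact ⟨z - p 0, by simpa [vsub_eq_sub] using h, by abel⟩
          · rintro ⟨v, hv, rfl⟩; simpa [vsub_eq_sub] using hv
        rw [hset]; exact hle
    · right
      push_neg at hclose
      obtain ⟨y, hyF, hyd⟩ := hclose
      refine ⟨Fin.snoc p y, ?_, ?_⟩
      · intro i
        refine Fin.lastCases ?_ ?_ i
        · rw [Fin.snoc_last]; exact hyF
        · intro i'; rw [Fin.snoc_castSucc]; exact hpF i'
      · have h0 : (Fin.snoc p y : Fin (j + 2) → EuclideanSpace ℝ (Fin m)) 0 = p 0 := by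
          have h00 : (0 : Fin (j + 2)) = Fin.castSucc 0 := rfl
          rw [h00, Fin.snoc_castSucc]
        intro i
        refine Fin.lastCases ?_ ?_ i
        · intro _
          have hval : ((Fin.last (j + 1) : Fin (j + 2)) : ℕ) = j + 1 := rfl
          rw [Fin.snoc_last, hval, snoc_image_eq p y (j + 1) le_rfl, hrange, h0]
          exact le_of_lt (by rw [mul_comm]; exact hyd)
        · intro i' hi
          have hi' : 0 < (i' : ℕ) := by simpa using hi
          have hval : ((Fin.castSucc i' : Fin (j + 2)) : ℕ) = (i' : ℕ) := rfl
          rw [Fin.snoc_castSucc, hval,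
            snoc_image_eq p y (i' : ℕ) (le_of_lt i'.is_lt), h0]
          exact hpd i' hi'
  -- induction
  have main : ∀ j, j ≤ k → GoalT m k F ρ r ∨ GoodT m F (r * ρ) j := by
    intro j
    induction j with
    | zero =>
      intro _
      right
      refine ⟨fun _ => p0, fun _ => hp0, ?_⟩
      intro i hi
      exact absurd hi (by simp [Fin.val_eq_zero i])
    | succ j ih =>
      intro hjk
      rcases ih (le_of_lt hjk) with hg | hgood
      · exact Or.inl hg
      · exact step j hjk hgood
  rcases main k le_rfl with hg | hgood
  · exact hg
  · exact absurd hgood hspan
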